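/- The group G = ⟨a, b, s, t | b⁻¹ab = a, s⁻¹a²s = a⁴, t⁻¹at = a², t⁻¹bt = b, t⁻¹st = s⁻¹bs²⟩ is non-Hopfian: there exists a group homomorphism Ψ : G → G that is surjective but not injective. -/

import Mathlib

/-- Generators `a`, `b`, `s`, `t` of the presented group `G`. -/
inductive Gen4 : Type
  | a | b | s | t

open FreeGroup in
/-- The relators `b⁻¹aba⁻¹`, `s⁻¹a²sa⁻⁴`, `t⁻¹ata⁻²`, `t⁻¹btb⁻¹`, `t⁻¹st(s⁻¹bs²)⁻¹`. -/
def relsG : Set (FreeGroup Gen4) :=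
  {(of Gen4.b)⁻¹ * of Gen4.a * of Gen4.b * (of Gen4.a)⁻¹,
   (of Gen4.s)⁻¹ * (of Gen4.a) ^ 2 * of Gen4.s * ((of Gen4.a) ^ 4)⁻¹,
   (of Gen4.t)⁻¹ * of Gen4.a * of Gen4.t * ((of Gen4.a) ^ 2)⁻¹,
   (of Gen4.t)⁻¹ * of Gen4.b * of Gen4.t * (of Gen4.b)⁻¹,
   (of Gen4.t)⁻¹ * of Gen4.s * of Gen4.t *
     ((of Gen4.s)⁻¹ * of Gen4.b * (of Gen4.s) ^ 2)⁻¹}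

/-- The group `G = ⟨a,b,s,t ∣ b⁻¹ab = a, s⁻¹a²s = a⁴, t⁻¹at = a², t⁻¹bt = b, t⁻¹st = s⁻¹bs²⟩`. -/
abbrev G : Type := PresentedGroup relsG


namespace NonHopfAux

open HNNExtension

abbrev Z2 : Type := Multiplicative (ℤ × ℤ)

/-- `α^m` -/
def ap (m : ℤ) : Z2 := Multiplicative.ofAdd (m, 0)
/-- `β` -/
def bt : Z2 := Multiplicative.ofAdd (0, 1)

lemma ap_mul (m n : ℤ) : ap m * ap n = ap (m + n) := rfl
lemma ap_bt_comm : ap 2 * bt = bt * ap 2 := by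
  show Multiplicative.ofAdd _ = Multiplicative.ofAdd _
  simp [ap, bt, ← ofAdd_add]

/-- `k ↦ α^(4k)` -/
def f4 : Multiplicative ℤ →* Z2 :=
  AddMonoidHom.toMultiplicative
    { toFun := fun k => (4 * k, 0)
      map_zero' := by simp
      map_add' := by intro x y; simp [Prod.ext_iff]; ring }

/-- `k ↦ α^(2k)` -/
def f2 : Multiplicative ℤ →* Z2 :=
  AddMonoidHom.toMultiplicative
    { toFun := fun k => (2 * k, 0)
      map_zero' := by simp
      map_add' := by intro x y; simp [Prod.ext_iff]; ring }

lemma f4_apply (k : ℤ) : f4 (Multiplicative.ofAdd k) = ap (4 * k) := rfl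
lemma f2_apply (k : ℤ) : f2 (Multiplicative.ofAdd k) = ap (2 * k) := rfl

lemma f4_inj : Function.Injective f4 := by
  intro x y h
  have : (4 * x.toAdd, (0:ℤ)) = (4 * y.toAdd, (0:ℤ)) := congrArg Multiplicative.toAdd h
  have h1 : 4 * x.toAdd = 4 * y.toAdd := congrArg Prod.fst this
  have h2 : x.toAdd = y.toAdd := by omega
  exact Multiplicative.toAdd.injective h2

lemma f2_inj : Function.Injective f2 := by
  intro x y h
  have : (2 * x.toAdd, (0:ℤ)) = (2 * y.toAdd, (0:ℤ)) := congrArg Multiplicative.toAdd h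
  have h1 : 2 * x.toAdd = 2 * y.toAdd := congrArg Prod.fst this
  have h2 : x.toAdd = y.toAdd := by omega
  exact Multiplicative.toAdd.injective h2

def A0 : Subgroup Z2 := f4.range
def B0 : Subgroup Z2 := f2.range

lemma mem_A0 (k : ℤ) : ap (4 * k) ∈ A0 := ⟨Multiplicative.ofAdd k, rfl⟩
lemma mem_B0 (k : ℤ) : ap (2 * k) ∈ B0 := ⟨Multiplicative.ofAdd k, rfl⟩

lemma mem_A0_iff (x : Z2) : x ∈ A0 ↔ ∃ k : ℤ, x = ap (4 * k) := by
  constructor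
  · rintro ⟨k, rfl⟩; exact ⟨k.toAdd, rfl⟩
  · rintro ⟨k, rfl⟩; exact mem_A0 k

lemma mem_B0_iff (x : Z2) : x ∈ B0 ↔ ∃ k : ℤ, x = ap (2 * k) := by
  constructor
  · rintro ⟨k, rfl⟩; exact ⟨k.toAdd, rfl⟩
  · rintro ⟨k, rfl⟩; exact mem_B0 k

lemma bt_notmem_A0 : bt ∉ A0 := by
  rw [mem_A0_iff]
  rintro ⟨k, hk⟩
  have : ((0:ℤ), (1:ℤ)) = (4 * k, 0) := congrArg Multiplicative.toAdd hk
  simp [Prod.ext_iff] at this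

lemma bt_notmem_B0 : bt ∉ B0 := by
  rw [mem_B0_iff]
  rintro ⟨k, hk⟩
  have : ((0:ℤ), (1:ℤ)) = (2 * k, 0) := congrArg Multiplicative.toAdd hk
  simp [Prod.ext_iff] at this

lemma ap2_notmem_A0 : ap 2 ∉ A0 := by
  rw [mem_A0_iff]
  rintro ⟨k, hk⟩
  have : ((2:ℤ), (0:ℤ)) = (4 * k, 0) := congrArg Multiplicative.toAdd hk
  simp [Prod.ext_iff] at this
  omega

noncomputable def phi0 : A0 ≃* B0 :=
  (MonoidHom.ofInjective f4_inj).symm.trans (MonoidHom.ofInjective f2_inj)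

lemma phi0_apply (k : ℤ) :
    (phi0 ⟨ap (4 * k), mem_A0 k⟩ : Z2) = ap (2 * k) := by
  have h4 : (MonoidHom.ofInjective f4_inj) (Multiplicative.ofAdd k) = ⟨ap (4*k), mem_A0 k⟩ :=
    Subtype.ext (MonoidHom.ofInjective_apply f4_inj)
  have : phi0 ⟨ap (4*k), mem_A0 k⟩ =
      (MonoidHom.ofInjective f2_inj) (Multiplicative.ofAdd k) := by
    show (MonoidHom.ofInjective f2_inj) ((MonoidHom.ofInjective f4_inj).symm ((MonoidHom.ofInjective f4_inj) (Multiplicative.ofAdd k))) = _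
    exact congrArg _ (MulEquiv.symm_apply_apply _ _)
  rw [this]
  exact MonoidHom.ofInjective_apply f2_inj


open HNNExtension

abbrev HH : Type := HNNExtension Z2 A0 B0 phi0

noncomputable def aH : HH := of (ap 1)
noncomputable def bH : HH := of bt
noncomputable def sH : HH := t

lemma s_conj4 (k : ℤ) : sH * of (ap (4 * k)) * sH⁻¹ = of (ap (2 * k)) := by
  have h := t_mul_of (G := Z2) (A := A0) (B := B0) (φ := phi0) ⟨ap (4*k), mem_A0 k⟩
  rw [phi0_apply] at h
  rw [show (sH : HH) = t from rfl, h]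
  group

lemma s_mul_ap (k : ℤ) : sH * of (ap (4 * k)) = of (ap (2 * k)) * sH := by
  have h := s_conj4 k
  rw [← h]; group

lemma of_bt_comm (g : Z2) : (of g : HH) * of bt = of bt * of g := by
  rw [← map_mul, ← map_mul, mul_comm]

def dbl : Z2 →* Z2 :=
  AddMonoidHom.toMultiplicative
    { toFun := fun p => (2 * p.1, p.2)
      map_zero' := by simp
      map_add' := by intro x y; simp [Prod.ext_iff]; ring }

lemma dbl_ap (m : ℤ) : dbl (ap m) = ap (2 * m) := rfl
lemma dbl_bt : dbl bt = bt := rfl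

noncomputable def phi : HH →* HH :=
  HNNExtension.lift (of.comp dbl) (sH⁻¹ * bH * sH ^ 2) (by
    intro a
    obtain ⟨x, hxmem⟩ := a
    obtain ⟨m, rfl⟩ := (mem_A0_iff x).1 hxmem
    have hsub : (⟨ap (4*m), hxmem⟩ : A0) = ⟨ap (4 * m), mem_A0 m⟩ := rfl
    show sH⁻¹ * bH * sH ^ 2 * of (dbl (ap (4*m))) =
      of (dbl ((phi0 ⟨ap (4*m), hxmem⟩ : B0) : Z2)) * (sH⁻¹ * bH * sH ^ 2)
    rw [hsub, phi0_apply, dbl_ap, dbl_ap]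
    rw [show (2*(2*m) : ℤ) = 4 * m from by ring]
    have e1 : (2 * (4 * m) : ℤ) = 4 * (2 * m) := by ring
    rw [e1]
    have A : sH * of (ap (4*(2*m))) = of (ap (2*(2*m))) * sH := s_mul_ap (2*m)
    have B : sH * of (ap (4*m)) = of (ap (2*m)) * sH := s_mul_ap m
    have h2 : sH^2 * of (ap (4*(2*m))) = of (ap (2*m)) * sH^2 := by
      have e2 : (2 * (2 * m) : ℤ) = 4 * m := by ring
      rw [pow_two, mul_assoc, A, e2, ← mul_assoc, B, mul_assoc, ← pow_two]
    have h3 : sH⁻¹ * of (ap (2*m)) = of (ap (4*m)) * sH⁻¹ := by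
      calc sH⁻¹ * of (ap (2*m)) = sH⁻¹ * (of (ap (2*m)) * sH) * sH⁻¹ := by group
        _ = sH⁻¹ * (sH * of (ap (4*m))) * sH⁻¹ := by rw [B]
        _ = of (ap (4*m)) * sH⁻¹ := by group
    calc sH⁻¹ * bH * sH ^ 2 * of (ap (4*(2*m)))
        = sH⁻¹ * bH * (sH ^ 2 * of (ap (4*(2*m)))) := by group
      _ = sH⁻¹ * bH * (of (ap (2*m)) * sH^2) := by rw [h2]
      _ = sH⁻¹ * (of bt * of (ap (2*m))) * sH^2 := by show _ = _; rw [bH]; group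
      _ = sH⁻¹ * (of (ap (2*m)) * of bt) * sH^2 := by rw [← of_bt_comm]
      _ = (sH⁻¹ * of (ap (2*m))) * of bt * sH^2 := by group
      _ = of (ap (4*m)) * sH⁻¹ * of bt * sH^2 := by rw [h3]
      _ = of (ap (4*m)) * (sH⁻¹ * bH * sH ^ 2) := by rw [bH]; group)

@[simp] lemma phi_of (g : Z2) : phi (of g) = of (dbl g) := lift_of _ _ _ _
@[simp] lemma phi_s : phi sH = sH⁻¹ * bH * sH ^ 2 := lift_t _ _ _
lemma phi_b : phi bH = bH := phi_of bt
lemma phi_ap (m : ℤ) : phi (of (ap m)) = of (ap (2 * m)) := phi_of (ap m)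



noncomputable def phiE : Monoid.End HH := phi

lemma phiE_apply (x : HH) : phiE x = phi x := rfl

lemma end_pow_succ (n : ℕ) (x : HH) : (phiE ^ (n+1)) x = (phiE ^ n) (phi x) := by
  rw [pow_succ]; rfl

noncomputable def cH (n : ℕ) : HH := (phiE ^ n) sH

noncomputable def fH : ℕ → HH
  | 0 => sH
  | n+1 => (cH n)⁻¹ * bH * fH n

noncomputable def X0 : HH := sH * of (ap 2) * sH⁻¹

noncomputable def XH (n : ℕ) : HH := (phiE ^ n) X0

lemma cH_zero : cH 0 = sH := rfl

lemma phiEn_b (n : ℕ) : (phiE ^ n) bH = bH := by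
  induction n with
  | zero => rfl
  | succ n ih => rw [end_pow_succ, show phi bH = bH from phi_b, ih]

lemma cH_succ (n : ℕ) : cH (n+1) = (cH n)⁻¹ * bH * (cH n)^2 := by
  show (phiE ^ (n+1)) sH = _
  rw [end_pow_succ, phi_s]
  rw [map_mul, map_mul, map_inv, map_pow]
  rw [phiEn_b]
  rfl

lemma s_conj_ap2 : sH * of (ap 4) * sH⁻¹ = of (ap 2) := by
  have := s_conj4 1
  norm_num at this
  exact this

lemma X0_phi : phi X0 = sH⁻¹ * bH * X0 * bH⁻¹ * sH := by
  have h1 : phi X0 = (sH⁻¹ * bH * sH^2) * of (ap 4) * (sH⁻¹ * bH * sH^2)⁻¹ := by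
    rw [X0, map_mul, map_mul, map_inv, phi_s, phi_of, dbl_ap]
    norm_num
  have h2 : sH^2 * of (ap 4) * (sH^2)⁻¹ = X0 := by
    have e4 : sH * of (ap 4) = of (ap 2) * sH := by
      have := s_conj_ap2; rw [← this]; group
    rw [X0]
    calc sH^2 * of (ap 4) * (sH^2)⁻¹ = sH * (sH * of (ap 4)) * sH⁻¹ * sH⁻¹ := by
          rw [pow_two]; group
      _ = sH * (of (ap 2) * sH) * sH⁻¹ * sH⁻¹ := by rw [e4]
      _ = sH * of (ap 2) * sH⁻¹ := by group
  calc phi X0 = (sH⁻¹ * bH) * (sH^2 * of (ap 4) * (sH^2)⁻¹) * (bH⁻¹ * sH) := by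
        rw [h1]; group
    _ = sH⁻¹ * bH * X0 * bH⁻¹ * sH := by rw [h2]; group

lemma XH_succ (n : ℕ) : XH (n+1) = (cH n)⁻¹ * bH * XH n * bH⁻¹ * cH n := by
  show (phiE ^ (n+1)) X0 = _
  rw [end_pow_succ, X0_phi]
  rw [map_mul, map_mul, map_mul, map_mul, map_inv, map_inv]
  rw [phiEn_b]
  rfl

lemma XH_conj (n : ℕ) : XH n = fH n * of (ap 2) * (fH n)⁻¹ := by
  induction n with
  | zero => rfl
  | succ n ih =>
    rw [XH_succ, ih, fH]
    group

noncomputable def Kel : HH := X0 * bH * X0⁻¹ * bH⁻¹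

lemma phiEn_K (n : ℕ) : (phiE ^ n) Kel = XH n * bH * (XH n)⁻¹ * bH⁻¹ := by
  rw [Kel, map_mul, map_mul, map_mul, map_inv, map_inv, phiEn_b]
  rfl


/-! ### Word machinery -/

abbrev LW : Type := List (ℤˣ × Z2)

def RR : (ℤˣ × Z2) → (ℤˣ × Z2) → Prop :=
  fun a b => a.2 ∈ toSubgroup A0 B0 a.1 → a.1 = b.1

lemma bt_notmem_toSubgroup (u : ℤˣ) : bt ∉ toSubgroup A0 B0 u := by
  rcases Int.units_eq_one_or u with rfl | rfl
  · simpa using bt_notmem_A0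
  · simpa using bt_notmem_B0

lemma bt_inv_notmem_toSubgroup (u : ℤˣ) : bt⁻¹ ∉ toSubgroup A0 B0 u := by
  intro h
  exact bt_notmem_toSubgroup u ((inv_mem_iff (x := bt)).mp h)

lemma RR_bt (u : ℤˣ) (y : ℤˣ × Z2) : RR (u, bt) y :=
  fun h => absurd h (bt_notmem_toSubgroup u)

lemma RR_ap2 (y : ℤˣ × Z2) : RR ((1 : ℤˣ), ap 2) y :=
  fun h => absurd h (by simpa using ap2_notmem_A0)

noncomputable def spine (l : LW) : HH := (l.map fun x => (t : HH) ^ (x.1 : ℤ) * of x.2).prod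

lemma spine_nil : spine [] = 1 := rfl

lemma spine_cons (x : ℤˣ × Z2) (l : LW) :
    spine (x :: l) = (t : HH) ^ (x.1 : ℤ) * of x.2 * spine l := by
  simp [spine]

lemma spine_append (l₁ l₂ : LW) : spine (l₁ ++ l₂) = spine l₁ * spine l₂ := by
  simp [spine]

def lastP (l : LW) : ℤˣ × Z2 := l.getLast?.getD (1, 1)

lemma lastP_eq_getLast (l : LW) (h : l ≠ []) : lastP l = l.getLast h := by
  rw [lastP, List.getLast?_eq_getLast_of_ne_nil h]; rfl

lemma dropLast_lastP (l : LW) (h : l ≠ []) : l.dropLast ++ [lastP l] = l := by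
  rw [lastP_eq_getLast l h]; exact List.dropLast_append_getLast h

lemma lastP_cons_cons (x y : ℤˣ × Z2) (l : LW) : lastP (x :: y :: l) = lastP (y :: l) := by
  rw [lastP, lastP, List.getLast?_cons_cons]

lemma lastP_concat (l : LW) (x : ℤˣ × Z2) : lastP (l ++ [x]) = x := by
  rw [lastP, List.getLast?_concat]; rfl

def app1 (l₁ l₂ : LW) (x : Z2) : LW := l₁.dropLast ++ ((lastP l₁).1, x) :: l₂

lemma app1_ne_nil (l₁ l₂ : LW) (x : Z2) : app1 l₁ l₂ x ≠ [] := by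
  simp [app1]

lemma lastP_app1 (l₁ l₂ : LW) (x : Z2) (h₂ : l₂ ≠ []) :
    lastP (app1 l₁ l₂ x) = lastP l₂ := by
  rw [app1, lastP, List.getLast?_append_of_ne_nil _ (by simp), lastP]
  cases l₂ with
  | nil => exact absurd rfl h₂
  | cons y ys => rw [List.getLast?_cons_cons]; rfl

lemma lastP_app1_nil (l₁ : LW) (x : Z2) :
    lastP (app1 l₁ [] x) = ((lastP l₁).1, x) := by
  rw [app1, lastP, List.getLast?_append_of_ne_nil _ (by simp)]
  rfl

lemma spine_app1 (l₁ l₂ : LW) (x : Z2) (h : l₁ ≠ []) (hg : (lastP l₁).2 = 1) :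
    spine (app1 l₁ l₂ x) = spine l₁ * of x * spine l₂ := by
  conv_rhs => rw [← dropLast_lastP l₁ h]
  rw [app1, spine_append, spine_append, spine_cons, spine_cons, spine_nil, hg]
  simp [mul_assoc]

def invL : LW → Z2 → LW
  | [], _ => []
  | (u, g) :: rest, p => invL rest g ++ [(-u, p⁻¹)]

lemma invL_ne_nil (l : LW) (p : Z2) (h : l ≠ []) : invL l p ≠ [] := by
  cases l with
  | nil => exact absurd rfl h
  | cons x rest =>
    obtain ⟨u, g⟩ := x
    simp [invL]

lemma lastP_invL (u : ℤˣ) (g : Z2) (rest : LW) (p : Z2) :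
    lastP (invL ((u, g) :: rest) p) = (-u, p⁻¹) := by
  rw [invL, lastP_concat]

lemma spine_single (u : ℤˣ) (g : Z2) : spine [(u, g)] = (t : HH) ^ (u : ℤ) * of g := by
  simp [spine]

lemma spine_invL : ∀ (l : LW) (p : Z2), l ≠ [] → (lastP l).2 = 1 →
    spine (invL l p) = (of p * spine l)⁻¹ := by
  intro l
  induction l with
  | nil => intro p h; exact absurd rfl h
  | cons x rest ih =>
    intro p _ hg
    obtain ⟨u, g⟩ := x
    cases rest with
    | nil =>
      have hg1 : g = 1 := by simpa [lastP] using hg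
      subst hg1
      rw [invL, invL, List.nil_append, spine_single, spine_single]
      rw [map_one, map_inv, mul_one]
      rw [show ((-u : ℤˣ) : ℤ) = -(u : ℤ) from rfl, zpow_neg]
      group
    | cons y rest' =>
      have hg' : (lastP ((y :: rest') : LW)).2 = 1 := by
        rwa [lastP_cons_cons] at hg
      rw [invL, spine_append, ih g (by simp) hg']
      rw [spine_single, spine_cons (x := (u, g))]
      rw [map_inv]
      rw [show ((-u : ℤˣ) : ℤ) = -(u : ℤ) from rfl, zpow_neg]
      group

lemma chain_invL : ∀ (l : LW) (p : Z2), l.Chain' RR → (invL l p).Chain' RR := by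
  intro l
  induction l with
  | nil => intro p _; exact List.isChain_nil
  | cons x rest ih =>
    intro p hc
    obtain ⟨u, g⟩ := x
    rw [invL, List.Chain', List.isChain_append]
    obtain ⟨hhead, htail⟩ := List.isChain_cons.mp hc
    refine ⟨ih g htail, List.isChain_singleton _, ?_⟩
    intro z hz y hy
    cases rest with
    | nil => simp [invL] at hz
    | cons w rest' =>
      obtain ⟨u', g'⟩ := w
      have hz' : (-u', g⁻¹) = z := by
        have := lastP_invL u' g' rest' g
        rw [lastP, hz] at this
        simpa using this.symm
      have hy' : (-u, p⁻¹) = y := by simpa using hy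
      subst hz'; subst hy'
      intro hmem
      have hR : RR (u, g) (u', g') := hhead _ (by simp)
      rcases Int.units_eq_one_or u with rfl | rfl <;>
        rcases Int.units_eq_one_or u' with rfl | rfl
      · rfl
      · exfalso
        have : g ∈ toSubgroup A0 B0 1 := (inv_mem_iff).mp (by simpa using hmem)
        have h1 := hR this
        simp at h1
      · exfalso
        have : g ∈ toSubgroup A0 B0 (-1) := (inv_mem_iff).mp (by simpa using hmem)
        have h1 := hR this
        simp at h1
      · rfl

lemma chain_app1 (l₁ l₂ : LW) (x : Z2) (h₁ : l₁.Chain' RR) (h₂ : l₂.Chain' RR)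
    (hne : l₁ ≠ []) (hjun : ∀ y ∈ l₂.head?, RR ((lastP l₁).1, x) y) :
    (app1 l₁ l₂ x).Chain' RR := by
  have hsplit : l₁.Chain' RR := h₁
  rw [← dropLast_lastP l₁ hne, List.Chain', List.isChain_append] at hsplit
  obtain ⟨hdrop, _, hjun0⟩ := hsplit
  rw [app1, List.Chain', List.isChain_append]
  refine ⟨hdrop, List.isChain_cons.mpr ⟨hjun, h₂⟩, ?_⟩
  intro z hz y hy
  have hy' : ((lastP l₁).1, x) = y := by simpa using hy
  subst hy'
  have := hjun0 z hz (lastP l₁) (by simp)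
  intro hmem
  exact this hmem


/-! ### The explicit reduced words -/

def Gam : ℕ → LW × LW
  | 0 => ([((1:ℤˣ), (1:Z2))], [((1:ℤˣ), (1:Z2)), ((1:ℤˣ), (1:Z2))])
  | n+1 => (app1 (invL (Gam n).1 1) (Gam n).2 bt,
            app1 (invL (Gam n).1 1) (app1 (Gam n).1 (Gam n).2 bt) bt)

def Fw : ℕ → LW
  | 0 => [((1:ℤˣ), (1:Z2))]
  | n+1 => app1 (invL (Gam n).1 1) (Fw n) bt

def Good (l : LW) : Prop := l.Chain' RR ∧ l ≠ [] ∧ (lastP l).2 = 1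

lemma good_invL {l : LW} (h : Good l) : Good (invL l 1) := by
  obtain ⟨hc, hn, -⟩ := h
  refine ⟨chain_invL l 1 hc, invL_ne_nil l 1 hn, ?_⟩
  cases l with
  | nil => exact absurd rfl hn
  | cons x rest =>
    obtain ⟨u, g⟩ := x
    rw [lastP_invL]
    simp

lemma good_app1_bt {l₁ l₂ : LW} (h₁c : l₁.Chain' RR) (h₁n : l₁ ≠ []) (h₂ : Good l₂) :
    Good (app1 l₁ l₂ bt) := by
  refine ⟨chain_app1 l₁ l₂ bt h₁c h₂.1 h₁n (fun y _ => RR_bt _ y), app1_ne_nil _ _ _, ?_⟩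
  rw [lastP_app1 _ _ _ h₂.2.1]
  exact h₂.2.2

lemma good_base : Good [((1:ℤˣ), (1:Z2))] :=
  ⟨List.isChain_singleton _, by simp, by simp [lastP]⟩

lemma good_base2 : Good [((1:ℤˣ), (1:Z2)), ((1:ℤˣ), (1:Z2))] := by
  refine ⟨?_, by simp, by simp [lastP]⟩
  refine List.isChain_cons_cons.mpr ⟨fun _ => rfl, List.isChain_singleton _⟩

lemma gam_good : ∀ n, Good (Gam n).1 ∧ Good (Gam n).2 := by
  intro n
  induction n with
  | zero => exact ⟨good_base, good_base2⟩
  | succ n ih =>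
    obtain ⟨h1, h2⟩ := ih
    constructor
    · exact good_app1_bt (good_invL h1).1 (good_invL h1).2.1 h2
    · exact good_app1_bt (good_invL h1).1 (good_invL h1).2.1
        (good_app1_bt h1.1 h1.2.1 h2)

lemma spine_base : spine [((1:ℤˣ), (1:Z2))] = sH := by
  rw [spine_single]; simp [sH]

lemma spine_base2 : spine [((1:ℤˣ), (1:Z2)), ((1:ℤˣ), (1:Z2))] = sH ^ 2 := by
  rw [spine_cons, spine_base]
  simp [sH, pow_two]

lemma gam_spine : ∀ n, spine (Gam n).1 = cH n ∧ spine (Gam n).2 = (cH n) ^ 2 := by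
  intro n
  induction n with
  | zero => exact ⟨spine_base, spine_base2⟩
  | succ n ih =>
    obtain ⟨hs1, hs2⟩ := ih
    obtain ⟨hg1, hg2⟩ := gam_good n
    have hinv : spine (invL (Gam n).1 1) = (cH n)⁻¹ := by
      rw [spine_invL _ _ hg1.2.1 hg1.2.2, map_one, one_mul, hs1]
    constructor
    · show spine (app1 (invL (Gam n).1 1) (Gam n).2 bt) = _
      rw [spine_app1 _ _ _ (good_invL hg1).2.1 (good_invL hg1).2.2, hinv, hs2, cH_succ]
      rfl
    · show spine (app1 (invL (Gam n).1 1) (app1 (Gam n).1 (Gam n).2 bt) bt) = _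
      rw [spine_app1 _ _ _ (good_invL hg1).2.1 (good_invL hg1).2.2, hinv,
        spine_app1 _ _ _ hg1.2.1 hg1.2.2, hs1, hs2, cH_succ]
      show (cH n)⁻¹ * bH * (cH n * bH * (cH n)^2) = _
      conv_rhs => rw [pow_two]
      group

lemma fw_good : ∀ n, Good (Fw n) := by
  intro n
  induction n with
  | zero => exact good_base
  | succ n ih =>
    have hg1 := (gam_good n).1
    exact good_app1_bt (good_invL hg1).1 (good_invL hg1).2.1 ih

lemma fw_last : ∀ n, (lastP (Fw n)).1 = 1 := by
  intro n
  induction n with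
  | zero => simp [Fw, lastP]
  | succ n ih =>
    show (lastP (app1 (invL (Gam n).1 1) (Fw n) bt)).1 = 1
    rw [lastP_app1 _ _ _ (fw_good n).2.1]
    exact ih

lemma fw_spine : ∀ n, spine (Fw n) = fH n := by
  intro n
  induction n with
  | zero => exact spine_base
  | succ n ih =>
    have hg1 := (gam_good n).1
    have hinv : spine (invL (Gam n).1 1) = (cH n)⁻¹ := by
      rw [spine_invL _ _ hg1.2.1 hg1.2.2, map_one, one_mul, (gam_spine n).1]
    show spine (app1 (invL (Gam n).1 1) (Fw n) bt) = _
    rw [spine_app1 _ _ _ (good_invL hg1).2.1 (good_invL hg1).2.2, hinv, ih]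
    rfl

/-- the reduced word for `XH n = fH n * a² * (fH n)⁻¹` -/
def CW (n : ℕ) : LW := app1 (Fw n) (invL (Fw n) 1) (ap 2)

lemma cw_chain (n : ℕ) : (CW n).Chain' RR := by
  apply chain_app1 _ _ _ (fw_good n).1 (chain_invL _ _ (fw_good n).1) (fw_good n).2.1
  intro y _
  rw [fw_last n]
  exact RR_ap2 y

lemma cw_ne (n : ℕ) : CW n ≠ [] := app1_ne_nil _ _ _

lemma cw_last2 (n : ℕ) : (lastP (CW n)).2 = 1 := by
  rw [CW, lastP_app1 _ _ _ (invL_ne_nil _ _ (fw_good n).2.1)]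
  exact (good_invL (fw_good n)).2.2

lemma cw_spine (n : ℕ) : spine (CW n) = XH n := by
  rw [CW, spine_app1 _ _ _ (fw_good n).2.1 (fw_good n).2.2,
    spine_invL _ _ (fw_good n).2.1 (fw_good n).2.2, map_one, one_mul, fw_spine, ← XH_conj]

lemma XH_bH_ne (n : ℕ) : XH n * bH ≠ bH * XH n := by
  intro h
  have hw2chain : (app1 (CW n) [] bt).Chain' RR :=
    chain_app1 _ _ _ (cw_chain n) List.isChain_nil (cw_ne n) (by intro y hy; simp at hy)
  let w₁ : HNNExtension.NormalWord.ReducedWord Z2 A0 B0 := ⟨bt, CW n, cw_chain n⟩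
  let w₂ : HNNExtension.NormalWord.ReducedWord Z2 A0 B0 := ⟨1, app1 (CW n) [] bt, hw2chain⟩
  have hp₁ : w₁.prod phi0 = bH * XH n := by
    show of bt * spine (CW n) = _
    rw [cw_spine]
    rfl
  have hp₂ : w₂.prod phi0 = XH n * bH := by
    show of 1 * spine (app1 (CW n) [] bt) = _
    rw [map_one, one_mul, spine_app1 _ _ _ (cw_ne n) (cw_last2 n), spine_nil, mul_one, cw_spine]
    rfl
  have heq : w₁.prod phi0 = w₂.prod phi0 := by rw [hp₁, hp₂, h]
  obtain ⟨-, h2⟩ := HNNExtension.ReducedWord.map_fst_eq_and_of_prod_eq phi0 heq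
  obtain ⟨hd, tl, hcw⟩ : ∃ hd tl, CW n = hd :: tl := by
    cases hcase : CW n with
    | nil => exact absurd hcase (cw_ne n)
    | cons hd tl => exact ⟨hd, tl, rfl⟩
  have hmem : hd.1 ∈ (w₁.toList.head?.map Prod.fst) := by
    show hd.1 ∈ ((CW n).head?.map Prod.fst)
    rw [hcw]
    simp
  have h3 := h2 hd.1 hmem
  have h4 : bt⁻¹ ∈ toSubgroup A0 B0 (-hd.1) := by
    have : w₁.head⁻¹ * w₂.head = bt⁻¹ := by
      show bt⁻¹ * 1 = bt⁻¹
      rw [mul_one]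
    rwa [this] at h3
  exact bt_inv_notmem_toSubgroup (-hd.1) h4

lemma phiEnK_ne_one (n : ℕ) : (phiE ^ n) Kel ≠ 1 := by
  intro h
  rw [phiEn_K] at h
  apply XH_bH_ne n
  calc XH n * bH = (XH n * bH * (XH n)⁻¹ * bH⁻¹) * (bH * XH n) := by group
    _ = 1 * (bH * XH n) := by rw [h]
    _ = bH * XH n := one_mul _


/-! ### Quotient by the union of iterated kernels, and the big HNN extension -/

lemma end_pow_succ' (n : ℕ) (x : HH) : (phiE ^ (n+1)) x = phi ((phiE ^ n) x) := by
  rw [pow_succ']; rfl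

lemma end_pow_add (n m : ℕ) (x : HH) : (phiE ^ (n + m)) x = (phiE ^ m) ((phiE ^ n) x) := by
  rw [add_comm, pow_add]; rfl

noncomputable def NN : Subgroup HH where
  carrier := {h | ∃ n : ℕ, (phiE ^ n) h = 1}
  one_mem' := ⟨0, map_one _⟩
  mul_mem' := by
    rintro x y ⟨n, hn⟩ ⟨m, hm⟩
    refine ⟨n + m, ?_⟩
    rw [map_mul, end_pow_add n m x, hn, map_one, one_mul]
    rw [show (n + m) = m + n from add_comm n m, end_pow_add m n y, hm, map_one]
  inv_mem' := by
    rintro x ⟨n, hn⟩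
    exact ⟨n, by rw [map_inv, hn, inv_one]⟩

lemma mem_NN {x : HH} : x ∈ NN ↔ ∃ n : ℕ, (phiE ^ n) x = 1 := Iff.rfl

instance NN_normal : NN.Normal := by
  constructor
  rintro x ⟨n, hn⟩ g
  refine ⟨n, ?_⟩
  rw [map_mul, map_mul, map_inv, hn, mul_one, mul_inv_cancel]

abbrev Hbar : Type := HH ⧸ NN

noncomputable def Qmk : HH →* Hbar := QuotientGroup.mk' NN

lemma NN_le_comap : NN ≤ NN.comap phi := by
  rintro x ⟨n, hn⟩
  refine ⟨n, ?_⟩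
  show (phiE ^ n) (phi x) = 1
  rw [← end_pow_succ, end_pow_succ' n x, hn, map_one]


noncomputable def phibar : Hbar →* Hbar := QuotientGroup.map NN NN phi NN_le_comap

lemma phibar_mk (x : HH) : phibar (Qmk x) = Qmk (phi x) :=
  QuotientGroup.map_mk NN NN phi NN_le_comap x

lemma phibar_inj : Function.Injective phibar := by
  rw [← MonoidHom.ker_eq_bot_iff]
  rw [eq_bot_iff]
  intro q hq
  obtain ⟨x, rfl⟩ := QuotientGroup.mk'_surjective NN q
  have h1 : phibar (Qmk x) = 1 := hq
  rw [phibar_mk] at h1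
  have h2 : phi x ∈ NN := (QuotientGroup.eq_one_iff _).mp h1
  obtain ⟨n, hn⟩ := h2
  have h3 : x ∈ NN := by
    refine ⟨n + 1, ?_⟩
    rw [end_pow_succ n x]
    exact hn
  simpa using (QuotientGroup.eq_one_iff _).mpr h3

noncomputable def ebar : (⊤ : Subgroup Hbar) ≃* phibar.range :=
  (Subgroup.topEquiv).trans (MonoidHom.ofInjective phibar_inj)

abbrev CC : Type := HNNExtension Hbar ⊤ phibar.range ebar

lemma tC_conj (x : Hbar) : (t : CC) * of x * t⁻¹ = of (phibar x) := by
  have h := t_mul_of (G := Hbar) (A := (⊤ : Subgroup Hbar)) (B := phibar.range)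
    (φ := ebar) ⟨x, Subgroup.mem_top x⟩
  have he : ((ebar ⟨x, Subgroup.mem_top x⟩ : phibar.range) : Hbar) = phibar x := rfl
  rw [he] at h
  rw [show ((⟨x, Subgroup.mem_top x⟩ : (⊤ : Subgroup Hbar)) : Hbar) = x from rfl] at h
  rw [h]
  group

lemma Kel_notin_NN : Kel ∉ NN := by
  rintro ⟨n, hn⟩
  exact phiEnK_ne_one n hn

lemma QmkKel_ne_one : Qmk Kel ≠ 1 := by
  intro h
  exact Kel_notin_NN ((QuotientGroup.eq_one_iff _).mp h)


/-! ### The presented group `G` -/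

section Gside

open PresentedGroup

def aG : G := PresentedGroup.of Gen4.a
def bG : G := PresentedGroup.of Gen4.b
def sG : G := PresentedGroup.of Gen4.s
def tG : G := PresentedGroup.of Gen4.t

lemma relG_mk (r : FreeGroup Gen4) (h : r ∈ relsG) : PresentedGroup.mk relsG r = 1 :=
  (QuotientGroup.eq_one_iff r).mpr (Subgroup.subset_normalClosure h)

lemma mem1 : (FreeGroup.of Gen4.b)⁻¹ * FreeGroup.of Gen4.a * FreeGroup.of Gen4.b *
    (FreeGroup.of Gen4.a)⁻¹ ∈ relsG := by left; rfl

lemma mem2 : (FreeGroup.of Gen4.s)⁻¹ * (FreeGroup.of Gen4.a) ^ 2 * FreeGroup.of Gen4.s *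
    ((FreeGroup.of Gen4.a) ^ 4)⁻¹ ∈ relsG := by right; left; rfl

lemma mem3 : (FreeGroup.of Gen4.t)⁻¹ * FreeGroup.of Gen4.a * FreeGroup.of Gen4.t *
    ((FreeGroup.of Gen4.a) ^ 2)⁻¹ ∈ relsG := by right; right; left; rfl

lemma mem4' : (FreeGroup.of Gen4.t)⁻¹ * FreeGroup.of Gen4.b * FreeGroup.of Gen4.t *
    (FreeGroup.of Gen4.b)⁻¹ ∈ relsG := by right; right; right; left; rfl

lemma mem5 : (FreeGroup.of Gen4.t)⁻¹ * FreeGroup.of Gen4.s * FreeGroup.of Gen4.t *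
    ((FreeGroup.of Gen4.s)⁻¹ * FreeGroup.of Gen4.b * (FreeGroup.of Gen4.s) ^ 2)⁻¹ ∈ relsG := by
  right; right; right; right; rfl

lemma hrel1 : bG⁻¹ * aG * bG * aG⁻¹ = 1 := by
  have h := relG_mk _ mem1
  simp only [map_mul, map_inv, map_pow] at h
  exact h

lemma hrel2 : sG⁻¹ * aG ^ 2 * sG * (aG ^ 4)⁻¹ = 1 := by
  have h := relG_mk _ mem2
  simp only [map_mul, map_inv, map_pow] at h
  exact h

lemma hrel3 : tG⁻¹ * aG * tG * (aG ^ 2)⁻¹ = 1 := by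
  have h := relG_mk _ mem3
  simp only [map_mul, map_inv, map_pow] at h
  exact h

lemma hrel4 : tG⁻¹ * bG * tG * bG⁻¹ = 1 := by
  have h := relG_mk _ mem4'
  simp only [map_mul, map_inv, map_pow] at h
  exact h

lemma hrel5 : tG⁻¹ * sG * tG * (sG⁻¹ * bG * sG ^ 2)⁻¹ = 1 := by
  have h := relG_mk _ mem5
  simp only [map_mul, map_inv, map_pow] at h
  exact h

lemma gcomm : aG * bG = bG * aG := by
  calc aG * bG = bG * (bG⁻¹ * aG * bG * aG⁻¹) * aG := by group
    _ = bG * 1 * aG := by rw [hrel1]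
    _ = bG * aG := by group

lemma grel2 : sG⁻¹ * aG ^ 2 * sG = aG ^ 4 := by
  calc sG⁻¹ * aG ^ 2 * sG = (sG⁻¹ * aG ^ 2 * sG * (aG ^ 4)⁻¹) * aG ^ 4 := by group
    _ = 1 * aG ^ 4 := by rw [hrel2]
    _ = aG ^ 4 := one_mul _

lemma grel3 : tG⁻¹ * aG * tG = aG ^ 2 := by
  calc tG⁻¹ * aG * tG = (tG⁻¹ * aG * tG * (aG ^ 2)⁻¹) * aG ^ 2 := by group
    _ = 1 * aG ^ 2 := by rw [hrel3]
    _ = aG ^ 2 := one_mul _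

lemma grel4 : tG⁻¹ * bG * tG = bG := by
  calc tG⁻¹ * bG * tG = (tG⁻¹ * bG * tG * bG⁻¹) * bG := by group
    _ = 1 * bG := by rw [hrel4]
    _ = bG := one_mul _

lemma grel5 : tG⁻¹ * sG * tG = sG⁻¹ * bG * sG ^ 2 := by
  calc tG⁻¹ * sG * tG = (tG⁻¹ * sG * tG * (sG⁻¹ * bG * sG ^ 2)⁻¹) * (sG⁻¹ * bG * sG ^ 2) := by
        group
    _ = 1 * (sG⁻¹ * bG * sG ^ 2) := by rw [hrel5]
    _ = sG⁻¹ * bG * sG ^ 2 := one_mul _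

lemma gcomm_pow (n : ℕ) : aG ^ n * bG = bG * aG ^ n :=
  ((Commute.pow_left (gcomm) n))

/-- images of generators under `Ψ` -/
def psif : Gen4 → G
  | Gen4.a => aG ^ 2
  | Gen4.b => bG
  | Gen4.s => sG
  | Gen4.t => tG

lemma psi_rels : ∀ r ∈ relsG, FreeGroup.lift psif r = 1 := by
  intro r hr
  rcases hr with rfl | rfl | rfl | rfl | rfl <;>
    simp only [map_mul, map_inv, map_pow, FreeGroup.lift_apply_of, psif]
  · calc bG⁻¹ * (aG ^ 2 * bG) * (aG ^ 2)⁻¹ = bG⁻¹ * (bG * aG ^ 2) * (aG ^ 2)⁻¹ := by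
          rw [gcomm_pow 2]
      _ = 1 := by group
  · have h4 : sG⁻¹ * aG ^ 4 * sG = aG ^ 8 := by
      calc sG⁻¹ * aG ^ 4 * sG
          = (sG⁻¹ * aG ^ 2 * sG) * (sG⁻¹ * aG ^ 2 * sG) := by
            rw [show (4:ℕ) = 2 + 2 from rfl, pow_add]; group
        _ = aG ^ 4 * aG ^ 4 := by rw [grel2]
        _ = aG ^ 8 := by rw [← pow_add]
    calc sG⁻¹ * (aG ^ 2) ^ 2 * sG * (((aG ^ 2) ^ 4)⁻¹)
        = (sG⁻¹ * aG ^ 4 * sG) * (aG ^ 8)⁻¹ := by group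
      _ = aG ^ 8 * (aG ^ 8)⁻¹ := by rw [h4]
      _ = 1 := by group
  · have h2 : tG⁻¹ * aG ^ 2 * tG = aG ^ 4 := by
      calc tG⁻¹ * aG ^ 2 * tG = (tG⁻¹ * aG * tG) * (tG⁻¹ * aG * tG) := by
            rw [pow_two]; group
        _ = aG ^ 2 * aG ^ 2 := by rw [grel3]
        _ = aG ^ 4 := by rw [← pow_add]
    calc tG⁻¹ * aG ^ 2 * tG * (((aG ^ 2) ^ 2)⁻¹) = (tG⁻¹ * aG ^ 2 * tG) * (aG ^ 4)⁻¹ := by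
          group
      _ = aG ^ 4 * (aG ^ 4)⁻¹ := by rw [h2]
      _ = 1 := by group
  · rw [show tG⁻¹ * bG * tG * bG⁻¹ = (tG⁻¹ * bG * tG) * bG⁻¹ from by group, grel4]
    group
  · rw [show tG⁻¹ * sG * tG * (sG⁻¹ * bG * sG ^ 2)⁻¹ =
      (tG⁻¹ * sG * tG) * (sG⁻¹ * bG * sG ^ 2)⁻¹ from by group, grel5]
    group

noncomputable def Psi : G →* G := PresentedGroup.toGroup psi_rels

lemma Psi_a : Psi aG = aG ^ 2 := PresentedGroup.toGroup.of psi_rels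
lemma Psi_b : Psi bG = bG := PresentedGroup.toGroup.of psi_rels
lemma Psi_s : Psi sG = sG := PresentedGroup.toGroup.of psi_rels
lemma Psi_t : Psi tG = tG := PresentedGroup.toGroup.of psi_rels

lemma Psi_surj : Function.Surjective Psi := by
  rw [← MonoidHom.range_eq_top]
  have hclosure := PresentedGroup.closure_range_of relsG
  rw [← top_le_iff, ← hclosure]
  apply Subgroup.closure_le Psi.range |>.mpr
  rintro x ⟨g, rfl⟩
  cases g with
  | a =>
    refine ⟨tG * aG * tG⁻¹, ?_⟩
    rw [map_mul, map_mul, map_inv, Psi_t, Psi_a]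
    show tG * aG ^ 2 * tG⁻¹ = aG
    rw [← grel3]
    group
  | b => exact ⟨bG, Psi_b⟩
  | s => exact ⟨sG, Psi_s⟩
  | t => exact ⟨tG, Psi_t⟩

/-- The witness element `[s a² s⁻¹, b]`. -/
def wG : G := (sG * aG ^ 2 * sG⁻¹) * bG * (sG * aG ^ 2 * sG⁻¹)⁻¹ * bG⁻¹

lemma Psi_wG : Psi wG = 1 := by
  have hY : sG * aG ^ 4 * sG⁻¹ = aG ^ 2 := by
    rw [← grel2]; group
  have h1 : Psi wG = (sG * aG ^ 4 * sG⁻¹) * bG * (sG * aG ^ 4 * sG⁻¹)⁻¹ * bG⁻¹ := by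
    rw [wG]
    simp only [map_mul, map_inv, map_pow, Psi_a, Psi_b, Psi_s]
    group
  rw [h1, hY]
  calc aG ^ 2 * bG * (aG ^ 2)⁻¹ * bG⁻¹
      = (aG ^ 2 * bG) * (aG ^ 2)⁻¹ * bG⁻¹ := by group
    _ = (bG * aG ^ 2) * (aG ^ 2)⁻¹ * bG⁻¹ := by rw [gcomm_pow 2]
    _ = 1 := by group

end Gside

/-! ### The detecting homomorphism `ρ : G →* CC` -/

section Rho

/-- the composite `HH →* CC` -/
noncomputable def FF : HH →* CC := (HNNExtension.of).comp Qmk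

lemma FF_inj_on_Kel : FF Kel ≠ 1 := by
  intro h
  have h2 : (HNNExtension.of (Qmk Kel) : CC) = HNNExtension.of (1 : Hbar) := by
    rw [map_one]; exact h
  exact QmkKel_ne_one (HNNExtension.of_injective (φ := ebar) h2)

lemma of_ap_pow (n : ℕ) : (of (ap 1) : HH) ^ n = of (ap (n : ℤ)) := by
  induction n with
  | zero =>
    rw [pow_zero, Nat.cast_zero, show ap 0 = (1 : Z2) from rfl, map_one]
  | succ n ih =>
    rw [pow_succ, ih, ← map_mul, ap_mul]
    congr 1

lemma aH2 : (aH : HH) ^ 2 = of (ap 2) := by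
  rw [aH, of_ap_pow]; norm_num

lemma aH4 : (aH : HH) ^ 4 = of (ap 4) := by
  rw [aH, of_ap_pow]; norm_num

lemma s_rel2 : sH⁻¹ * of (ap 2) * sH = of (ap 4) := by
  rw [← s_conj_ap2]; group

lemma hh_rel2 : sH⁻¹ * aH ^ 2 * sH = aH ^ 4 := by
  rw [aH2, aH4]; exact s_rel2

lemma hh_comm : aH * bH = bH * aH := by
  rw [aH, bH, ← map_mul, ← map_mul, mul_comm]

lemma phi_aH : phi aH = aH ^ 2 := by
  rw [aH2]
  show phi (of (ap 1)) = of (ap 2)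
  rw [phi_of, dbl_ap]
  norm_num

noncomputable def qa : CC := FF aH
noncomputable def qb : CC := FF bH
noncomputable def qs : CC := FF sH

lemma tC_conj_FF (x : HH) : (t : CC) * FF x * t⁻¹ = FF (phi x) := by
  show (t : CC) * of (Qmk x) * t⁻¹ = of (Qmk (phi x))
  rw [tC_conj, phibar_mk]

noncomputable def rhof : Gen4 → CC
  | Gen4.a => qa
  | Gen4.b => qb
  | Gen4.s => qs
  | Gen4.t => (t : CC)⁻¹

lemma rho_rels : ∀ r ∈ relsG, FreeGroup.lift rhof r = 1 := by
  intro r hr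
  rcases hr with rfl | rfl | rfl | rfl | rfl <;>
    simp only [map_mul, map_inv, map_pow, FreeGroup.lift_apply_of, rhof, inv_inv]
  · -- b⁻¹ a b a⁻¹
    have hcomm : qa * qb = qb * qa := by
      rw [qa, qb, ← map_mul, ← map_mul, hh_comm]
    calc qb⁻¹ * qa * qb * qa⁻¹ = qb⁻¹ * (qa * qb) * qa⁻¹ := by group
      _ = qb⁻¹ * (qb * qa) * qa⁻¹ := by rw [hcomm]
      _ = 1 := by group
  · -- s⁻¹ a² s a⁻⁴
    have h2 : qs⁻¹ * qa ^ 2 * qs = qa ^ 4 := by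
      rw [qa, qs, ← map_pow, ← map_pow, ← map_inv, ← map_mul, ← map_mul, hh_rel2]
    calc qs⁻¹ * qa ^ 2 * qs * (qa ^ 4)⁻¹ = (qs⁻¹ * qa ^ 2 * qs) * (qa ^ 4)⁻¹ := by group
      _ = qa ^ 4 * (qa ^ 4)⁻¹ := by rw [h2]
      _ = 1 := by group
  · -- t⁻¹ a t a⁻²
    have h3 : (t : CC) * qa * t⁻¹ = qa ^ 2 := by
      rw [qa, tC_conj_FF, phi_aH, map_pow]
    calc (t : CC) * qa * t⁻¹ * (qa ^ 2)⁻¹ = qa ^ 2 * (qa ^ 2)⁻¹ := by rw [h3]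
      _ = 1 := by group
  · -- t⁻¹ b t b⁻¹
    have h4 : (t : CC) * qb * t⁻¹ = qb := by
      rw [qb, tC_conj_FF, phi_b]
    calc (t : CC) * qb * t⁻¹ * qb⁻¹ = qb * qb⁻¹ := by rw [h4]
      _ = 1 := by group
  · -- t⁻¹ s t (s⁻¹ b s²)⁻¹
    have h5 : (t : CC) * qs * t⁻¹ = qs⁻¹ * qb * qs ^ 2 := by
      rw [qs, tC_conj_FF, phi_s]
      rw [map_mul, map_mul, map_inv, map_pow]
      rfl
    calc (t : CC) * qs * t⁻¹ * (qs⁻¹ * qb * qs ^ 2)⁻¹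
        = (qs⁻¹ * qb * qs ^ 2) * (qs⁻¹ * qb * qs ^ 2)⁻¹ := by rw [h5]
      _ = 1 := by group

noncomputable def rho : G →* CC := PresentedGroup.toGroup rho_rels

lemma rho_a : rho aG = qa := PresentedGroup.toGroup.of rho_rels
lemma rho_b : rho bG = qb := PresentedGroup.toGroup.of rho_rels
lemma rho_s : rho sG = qs := PresentedGroup.toGroup.of rho_rels

lemma X0_eq : X0 = sH * aH ^ 2 * sH⁻¹ := by rw [X0, aH2]

lemma rho_wG : rho wG = FF Kel := by
  have hK : Kel = (sH * aH ^ 2 * sH⁻¹) * bH * (sH * aH ^ 2 * sH⁻¹)⁻¹ * bH⁻¹ := by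
    rw [Kel, X0_eq]
  rw [wG, hK]
  simp only [map_mul, map_inv, map_pow, rho_a, rho_b, rho_s, qa, qb, qs]

lemma wG_ne_one : wG ≠ 1 := by
  intro h
  apply FF_inj_on_Kel
  rw [← rho_wG, h, map_one]

end Rho

theorem G_not_hopfian_aux :
    ∃ Ψ : G →* G, Function.Surjective Ψ ∧ ¬ Function.Injective Ψ := by
  refine ⟨Psi, Psi_surj, ?_⟩
  intro hinj
  apply wG_ne_one
  apply hinj
  rw [Psi_wG, map_one]

end NonHopfAux

/-- `G` is non-Hopfian: there is a surjective, non-injective endomorphism of `G`. -/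
theorem G_not_hopfian :
    ∃ Ψ : G →* G, Function.Surjective Ψ ∧ ¬ Function.Injective Ψ :=
  NonHopfAux.G_not_hopfian_aux
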